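/- Let Q be a simply-laced quiver. If Q contains a subquiver C which is an oriented cycle together with a vertex k not in C that is adjacent to exactly an odd number, greater than or equal to 3, of vertices of C, then Q is of infinite mutation type. -/

import Mathlib

open scoped Classical

/-- A quiver is encoded by its skew-symmetric exchange matrix. -/
def IsSkewQ {n : ℕ} (B : Matrix (Fin n) (Fin n) ℤ) : Prop :=
  ∀ i j, B j i = - B i j

/-- Fomin-Zelevinsky mutation of a skew-symmetric matrix at vertex `k`. -/
def mutate {n : ℕ} (B : Matrix (Fin n) (Fin n) ℤ) (k : Fin n) : Matrix (Fin n) (Fin n) ℤ :=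
  Matrix.of fun i j =>
    if i = k ∨ j = k then - B i j
    else B i j + Int.sign (B i k) * max (B i k * B k j) 0

def mutateList {n : ℕ} (B : Matrix (Fin n) (Fin n) ℤ) (l : List (Fin n)) :
    Matrix (Fin n) (Fin n) ℤ :=
  l.foldl mutate B

/-- `C` is obtained from `B` by a finite sequence of mutations followed by a
simultaneous relabeling of the index set. -/
def MutEquiv {n m : ℕ} (B : Matrix (Fin n) (Fin n) ℤ) (C : Matrix (Fin m) (Fin m) ℤ) : Prop :=
  ∃ (l : List (Fin n)) (σ : Fin m ≃ Fin n), C = (mutateList B l).submatrix ⇑σ ⇑σ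

/-- Finite mutation type: the mutation class is finite. -/
def FiniteMutationType {n : ℕ} (B : Matrix (Fin n) (Fin n) ℤ) : Prop :=
  {C : Matrix (Fin n) (Fin n) ℤ | MutEquiv B C}.Finite

/-- The underlying undirected graph of the quiver. -/
def quiverGraph {n : ℕ} (B : Matrix (Fin n) (Fin n) ℤ) : SimpleGraph (Fin n) where
  Adj i j := i ≠ j ∧ (B i j ≠ 0 ∨ B j i ≠ 0)
  symm := ⟨fun i j h => ⟨h.1.symm, h.2.symm⟩⟩
  loopless := ⟨fun i h => h.1 rfl⟩

def ConnectedQ {n : ℕ} (B : Matrix (Fin n) (Fin n) ℤ) : Prop :=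
  (quiverGraph B).Connected

def SimplyLaced {n : ℕ} (B : Matrix (Fin n) (Fin n) ℤ) : Prop :=
  ∀ i j, |B i j| ≤ 1

/-- The quiver (matrix) is a cycle: the vertices can be labeled by `ZMod m` so that
adjacency is exactly between consecutive labels. -/
def IsCycleMat {m : ℕ} (C : Matrix (Fin m) (Fin m) ℤ) : Prop :=
  3 ≤ m ∧ ∃ ρ : ZMod m ≃ Fin m, ∀ i j : ZMod m,
    C (ρ i) (ρ j) ≠ 0 ↔ (j = i + 1 ∨ i = j + 1)

/-- The quiver is an oriented cycle. -/
def IsOrientedCycleMat {m : ℕ} (C : Matrix (Fin m) (Fin m) ℤ) : Prop :=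
  3 ≤ m ∧ ∃ ρ : ZMod m ≃ Fin m,
    (∀ i j : ZMod m, C (ρ i) (ρ j) ≠ 0 ↔ (j = i + 1 ∨ i = j + 1)) ∧
    (∀ i : ZMod m, 0 < C (ρ i) (ρ (i + 1)))

def IsNonOrientedCycleMat {m : ℕ} (C : Matrix (Fin m) (Fin m) ℤ) : Prop :=
  IsCycleMat C ∧ ¬ IsOrientedCycleMat C

/-- A double edge: two vertices joined by an edge of weight 2. -/
def IsDoubleEdgeMat {m : ℕ} (C : Matrix (Fin m) (Fin m) ℤ) : Prop :=
  m = 2 ∧ ∃ i j : Fin m, i ≠ j ∧ (C i j = 2 ∨ C i j = -2)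

/-- The Dynkin tree D4: a center joined by single edges (arbitrarily oriented) to
three pairwise non-adjacent vertices. -/
def IsD4Mat {m : ℕ} (C : Matrix (Fin m) (Fin m) ℤ) : Prop :=
  m = 4 ∧ ∃ c : Fin m,
    (∀ i, i ≠ c → (C c i = 1 ∨ C c i = -1)) ∧
    (∀ i j, i ≠ c → j ≠ c → i ≠ j → C i j = 0)

/-- Two adjacent oriented simply-laced triangles sharing the edge `{c,d}`,
with `a`, `b` non-adjacent. -/
def IsTwoTrianglesMat {m : ℕ} (C : Matrix (Fin m) (Fin m) ℤ) : Prop :=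
  m = 4 ∧ ∃ a b c d : Fin m,
    a ≠ b ∧ a ≠ c ∧ a ≠ d ∧ b ≠ c ∧ b ≠ d ∧ c ≠ d ∧
    C a b = 0 ∧ C b a = 0 ∧
    C a c = 1 ∧ C c d = 1 ∧ C d a = 1 ∧ C b c = 1 ∧ C d b = 1

/-- Basic quivers: D4, two adjacent oriented triangles, or a simply-laced
oriented cycle with at least 4 vertices. -/
def IsBasicMat {m : ℕ} (C : Matrix (Fin m) (Fin m) ℤ) : Prop :=
  IsD4Mat C ∨ IsTwoTrianglesMat C ∨
    (4 ≤ m ∧ (∀ i j, |C i j| ≤ 1) ∧ IsOrientedCycleMat C)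

def HasBasicSubquiver {n : ℕ} (B : Matrix (Fin n) (Fin n) ℤ) : Prop :=
  ∃ (m : ℕ) (f : Fin m ↪ Fin n), IsBasicMat (B.submatrix ⇑f ⇑f)

/-- Build a skew-symmetric matrix from a list of weighted arrows. -/
def ofEdges (n : ℕ) (E : List (Fin n × Fin n × ℤ)) : Matrix (Fin n) (Fin n) ℤ :=
  Matrix.of fun i j =>
    E.foldl (fun acc e =>
      acc + (if e.1 = i ∧ e.2.1 = j then e.2.2 else 0)
          + (if e.1 = j ∧ e.2.1 = i then - e.2.2 else 0)) 0

def E6mat : Matrix (Fin 6) (Fin 6) ℤ :=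
  ofEdges 6 [(0,1,1),(1,2,1),(2,3,1),(3,4,1),(2,5,1)]

def E7mat : Matrix (Fin 7) (Fin 7) ℤ :=
  ofEdges 7 [(0,1,1),(1,2,1),(2,3,1),(3,4,1),(4,5,1),(2,6,1)]

def E8mat : Matrix (Fin 8) (Fin 8) ℤ :=
  ofEdges 8 [(0,1,1),(1,2,1),(2,3,1),(3,4,1),(4,5,1),(5,6,1),(2,7,1)]

def E6affMat : Matrix (Fin 7) (Fin 7) ℤ :=
  ofEdges 7 [(0,1,1),(1,2,1),(2,3,1),(3,4,1),(2,5,1),(5,6,1)]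

def E7affMat : Matrix (Fin 8) (Fin 8) ℤ :=
  ofEdges 8 [(0,1,1),(1,2,1),(2,3,1),(3,4,1),(4,5,1),(5,6,1),(3,7,1)]

def E8affMat : Matrix (Fin 9) (Fin 9) ℤ :=
  ofEdges 9 [(0,1,1),(1,2,1),(2,3,1),(3,4,1),(4,5,1),(5,6,1),(6,7,1),(2,8,1)]

/-- E6^(1,1): core b₁=0, b₂=1 (weight-2 arrow b₁→b₂), a₁=2, a₂=3, a₃=4 in oriented
triangles, with one extra path vertex attached at each aᵢ. -/
def E611Mat : Matrix (Fin 8) (Fin 8) ℤ :=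
  ofEdges 8 [(0,1,2),(2,0,1),(1,2,1),(3,0,1),(1,3,1),(4,0,1),(1,4,1),(2,5,1),(3,6,1),(4,7,1)]

def E711Mat : Matrix (Fin 9) (Fin 9) ℤ :=
  ofEdges 9 [(0,1,2),(2,0,1),(1,2,1),(3,0,1),(1,3,1),(4,0,1),(1,4,1),
             (2,5,1),(5,6,1),(4,7,1),(7,8,1)]

def E811Mat : Matrix (Fin 10) (Fin 10) ℤ :=
  ofEdges 10 [(0,1,2),(2,0,1),(1,2,1),(3,0,1),(1,3,1),(4,0,1),(1,4,1),
              (2,5,1),(4,6,1),(6,7,1),(7,8,1),(8,9,1)]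

/-- X6: c=0, a₁=1, a₂=2, b₁=3, b₂=4, d=5. -/
def X6mat : Matrix (Fin 6) (Fin 6) ℤ :=
  ofEdges 6 [(0,1,1),(2,0,1),(0,3,1),(4,0,1),(1,2,2),(3,4,2),(0,5,1)]

/-- X7: c=0, aᵢ=1,3,5, a′ᵢ=2,4,6. -/
def X7mat : Matrix (Fin 7) (Fin 7) ℤ :=
  ofEdges 7 [(0,1,1),(1,2,2),(2,0,1),(0,3,1),(3,4,2),(4,0,1),(0,5,1),(5,6,2),(6,0,1)]

/-- The kernel of B mod 2. -/
def Vbar0 {n : ℕ} (B : Matrix (Fin n) (Fin n) ℤ) : Submodule (ZMod 2) (Fin n → ZMod 2) :=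
  LinearMap.ker (Matrix.mulVecLin (B.map (fun x : ℤ => (x : ZMod 2))))

/-- A basic radical vector: a mod-2 radical vector whose support has exactly two
vertices or is a cycle. -/
def IsBasicRadical {n : ℕ} (B : Matrix (Fin n) (Fin n) ℤ) (u : Fin n → ZMod 2) : Prop :=
  u ∈ Vbar0 B ∧
    ({i | u i ≠ 0}.ncard = 2 ∨
      ∃ (m : ℕ) (f : Fin m ↪ Fin n),
        Set.range ⇑f = {i | u i ≠ 0} ∧ IsCycleMat (B.submatrix ⇑f ⇑f))

/-- The span of the basic radical vectors. -/
def Vbar00 {n : ℕ} (B : Matrix (Fin n) (Fin n) ℤ) : Submodule (ZMod 2) (Fin n → ZMod 2) :=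
  Submodule.span (ZMod 2) {u | IsBasicRadical B u}

section AuxBasic

variable {n : ℕ}

lemma mutate_apply (B : Matrix (Fin n) (Fin n) ℤ) (k i j : Fin n) (hi : i ≠ k) (hj : j ≠ k) :
    mutate B k i j = B i j + Int.sign (B i k) * max (B i k * B k j) 0 := by
  simp [mutate, hi, hj]

lemma mutate_apply_k (B : Matrix (Fin n) (Fin n) ℤ) (k i j : Fin n) (h : i = k ∨ j = k) :
    mutate B k i j = - B i j := by
  simp only [mutate, Matrix.of_apply, if_pos h]

lemma sign_aux (p q : ℤ) : Int.sign (-q) * max (q * p) 0 = -(Int.sign p * max (p * q) 0) := by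
  rcases le_or_gt (p * q) 0 with h | h
  · rw [max_eq_right h, max_eq_right (by rw [mul_comm]; exact h)]; ring
  · rw [max_eq_left h.le, max_eq_left (by rw [mul_comm]; exact h.le)]
    rcases mul_pos_iff.mp h with ⟨hp, hq⟩ | ⟨hp, hq⟩
    · rw [Int.sign_eq_one_of_pos hp, Int.sign_eq_neg_one_of_neg (by omega : -q < 0)]; ring
    · rw [Int.sign_eq_neg_one_of_neg hp, Int.sign_eq_one_of_pos (by omega : 0 < -q)]; ring

lemma IsSkewQ.mutate_skew {B : Matrix (Fin n) (Fin n) ℤ} (hB : IsSkewQ B) (k : Fin n) :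
    IsSkewQ (mutate B k) := by
  intro i j
  by_cases h : i = k ∨ j = k
  · rw [mutate_apply_k B k i j h, mutate_apply_k B k j i (Or.symm h), hB]
  · push_neg at h
    rw [mutate_apply B k i j h.1 h.2, mutate_apply B k j i h.2 h.1, hB i j, hB k j, hB i k]
    have h2 : -B k j * -B i k = B k j * B i k := by ring
    rw [h2, sign_aux (B i k) (B k j)]
    ring

lemma IsSkewQ.diag {B : Matrix (Fin n) (Fin n) ℤ} (hB : IsSkewQ B) (i : Fin n) : B i i = 0 := by
  have := hB i i; omega

lemma IsSkewQ.mutateList_skew {B : Matrix (Fin n) (Fin n) ℤ} (hB : IsSkewQ B)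
    (l : List (Fin n)) : IsSkewQ (mutateList B l) := by
  induction l generalizing B with
  | nil => exact hB
  | cons a l ih => exact ih (hB.mutate_skew a)

lemma mutateList_nil (B : Matrix (Fin n) (Fin n) ℤ) : mutateList B [] = B := rfl

lemma mutateList_cons (B : Matrix (Fin n) (Fin n) ℤ) (a : Fin n) (l : List (Fin n)) :
    mutateList B (a :: l) = mutateList (mutate B a) l := rfl

lemma mutateList_append (B : Matrix (Fin n) (Fin n) ℤ) (l₁ l₂ : List (Fin n)) :
    mutateList B (l₁ ++ l₂) = mutateList (mutateList B l₁) l₂ :=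
  List.foldl_append

lemma mutate_submatrix {s : ℕ} (B : Matrix (Fin n) (Fin n) ℤ) (g : Fin s → Fin n)
    (hg : Function.Injective g) (p : Fin s) :
    mutate (B.submatrix g g) p = (mutate B (g p)).submatrix g g := by
  ext i j
  simp only [mutate, Matrix.submatrix_apply, Matrix.of_apply, hg.eq_iff]

lemma mutateList_submatrix {s : ℕ} (B : Matrix (Fin n) (Fin n) ℤ) (g : Fin s → Fin n)
    (hg : Function.Injective g) (l : List (Fin s)) :
    mutateList (B.submatrix g g) l = (mutateList B (l.map g)).submatrix g g := by
  induction l generalizing B with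
  | nil => rfl
  | cons a l ih =>
    rw [mutateList_cons, List.map_cons, mutateList_cons, mutate_submatrix B g hg a, ih]

/-- Unbounded entries along mutation sequences. -/
def Unb (B : Matrix (Fin n) (Fin n) ℤ) : Prop :=
  ∀ N : ℤ, ∃ (l : List (Fin n)) (i j : Fin n), N ≤ mutateList B l i j

lemma unb_prepend (B : Matrix (Fin n) (Fin n) ℤ) (l₀ : List (Fin n))
    (h : Unb (mutateList B l₀)) : Unb B := by
  intro N
  obtain ⟨l, i, j, hle⟩ := h N
  exact ⟨l₀ ++ l, i, j, by rwa [mutateList_append]⟩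

lemma mutate_neg (B : Matrix (Fin n) (Fin n) ℤ) (a : Fin n) :
    mutate (-B) a = -(mutate B a) := by
  ext i j
  show mutate (-B) a i j = -(mutate B a i j)
  by_cases hc : i = a ∨ j = a
  · rw [mutate_apply_k _ a i j hc, mutate_apply_k _ a i j hc, Matrix.neg_apply]
  · push_neg at hc
    rw [mutate_apply _ a i j hc.1 hc.2, mutate_apply _ a i j hc.1 hc.2]
    simp only [Matrix.neg_apply]
    rw [show -B i a * -B a j = B i a * B a j by ring, Int.sign_neg]
    ring

lemma mutateList_neg (B : Matrix (Fin n) (Fin n) ℤ) (l : List (Fin n)) :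
    mutateList (-B) l = -(mutateList B l) := by
  induction l generalizing B with
  | nil => rfl
  | cons a l ih => rw [mutateList_cons, mutateList_cons, mutate_neg, ih]

lemma unb_neg (B : Matrix (Fin n) (Fin n) ℤ) (hB : IsSkewQ B) (h : Unb (-B)) : Unb B := by
  intro N
  obtain ⟨l, i, j, hle⟩ := h N
  rw [mutateList_neg B l, Matrix.neg_apply] at hle
  refine ⟨l, j, i, ?_⟩
  rw [hB.mutateList_skew l i j]
  omega

lemma unb_not_fmt (B : Matrix (Fin n) (Fin n) ℤ) (h : Unb B) : ¬ FiniteMutationType B := by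
  intro hf
  obtain ⟨l, i, j, hle⟩ := h
    ((hf.toFinset.sup (fun C => Finset.univ.sup
        fun p : Fin n × Fin n => (C p.1 p.2).toNat) : ℕ) + 1)
  have hmem : mutateList B l ∈ hf.toFinset := by
    refine (Set.Finite.mem_toFinset (hs := hf)).mpr ?_
    refine ⟨l, Equiv.refl _, ?_⟩
    simp [Matrix.submatrix_id_id]
  have h1 : ((mutateList B l) i j).toNat ≤ hf.toFinset.sup (fun C => Finset.univ.sup
      fun p : Fin n × Fin n => (C p.1 p.2).toNat) :=
    le_trans (Finset.le_sup (f := fun p : Fin n × Fin n => (mutateList B l p.1 p.2).toNat)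
        (Finset.mem_univ (i, j)))
      (Finset.le_sup
        (f := fun C => Finset.univ.sup fun p : Fin n × Fin n => (C p.1 p.2).toNat) hmem)
  generalize hg : hf.toFinset.sup (fun C => Finset.univ.sup
      fun p : Fin n × Fin n => (C p.1 p.2).toNat) = bd at h1 hle
  have h2 : ((mutateList B l i j).toNat : ℤ) ≤ (bd : ℤ) := Int.ofNat_le.mpr h1
  have h3 : (0:ℤ) ≤ mutateList B l i j :=
    le_trans (by positivity) hle
  rw [Int.toNat_of_nonneg h3] at h2
  have : ((bd : ℤ) + 1 : ℤ) ≤ (bd : ℤ) := le_trans hle h2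
  simp at this

end AuxBasic

section AuxGrowth

variable {n : ℕ}

lemma arith_core {a b c : ℤ} (h2a : 2 ≤ a) (h2b : 2 ≤ b) (h2c : 2 ≤ c)
    (hba : b ≤ a) (hbc : b ≤ c) (hs : 7 ≤ a + b + c) : 2 * b + 1 ≤ c * a := by
  rcases le_or_gt b 2 with h | h
  · have hb2 : b = 2 := by omega
    nlinarith [mul_nonneg (by omega : (0:ℤ) ≤ a - 2) (by omega : (0:ℤ) ≤ c - 2)]
  · nlinarith [mul_nonneg (by omega : (0:ℤ) ≤ a - b) (by omega : (0:ℤ) ≤ c - b),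
      mul_nonneg (by omega : (0:ℤ) ≤ a - b) (by omega : (0:ℤ) ≤ b),
      mul_nonneg (by omega : (0:ℤ) ≤ c - b) (by omega : (0:ℤ) ≤ b),
      mul_nonneg (by omega : (0:ℤ) ≤ b - 3) (by omega : (0:ℤ) ≤ b)]

/-- One growth step: given a cyclic triple with the minimum in the middle slot,
mutating at `x` produces a cyclic triple on `(x, z, y)` with strictly larger sum. -/
lemma growth_core {B : Matrix (Fin n) (Fin n) ℤ} (hB : IsSkewQ B) {x y z : Fin n}
    (hxy : x ≠ y) (hyz : y ≠ z) (hxz : x ≠ z)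
    (h2a : 2 ≤ B x y) (h2b : 2 ≤ B y z) (h2c : 2 ≤ B z x)
    (hba : B y z ≤ B x y) (hbc : B y z ≤ B z x)
    (hs : 7 ≤ B x y + B y z + B z x) :
    mutate B x x z = B z x ∧ mutate B x z y = B z x * B x y - B y z ∧
      mutate B x y x = B x y ∧
      B x y + B y z + B z x + 1 ≤ mutate B x x z + mutate B x z y + mutate B x y x := by
  have harith := arith_core h2a h2b h2c hba hbc hs
  have e1 : mutate B x x z = B z x := by
    rw [mutate_apply_k B x x z (Or.inl rfl), hB z x]; ring
  have e3 : mutate B x y x = B x y := by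
    rw [mutate_apply_k B x y x (Or.inr rfl), hB x y]; ring
  have e2 : mutate B x z y = B z x * B x y - B y z := by
    rw [mutate_apply B x z y (Ne.symm hxz) (Ne.symm hxy), hB y z,
      Int.sign_eq_one_of_pos (by omega : (0:ℤ) < B z x),
      max_eq_left (by positivity : (0:ℤ) ≤ B z x * B x y)]
    ring
  refine ⟨e1, e2, e3, ?_⟩
  rw [e1, e2, e3]
  omega

lemma growth_aux : ∀ (j : ℕ) {n : ℕ} (B : Matrix (Fin n) (Fin n) ℤ), IsSkewQ B →
    ∀ x y z : Fin n, x ≠ y → y ≠ z → x ≠ z →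
    2 ≤ B x y → 2 ≤ B y z → 2 ≤ B z x → 7 ≤ B x y + B y z + B z x →
    ∃ (l : List (Fin n)) (i₁ j₁ : Fin n),
      B x y + B y z + B z x + j ≤ 3 * mutateList B l i₁ j₁ := by
  intro j
  induction j with
  | zero =>
    intro n B hB x y z hxy hyz hxz h2a h2b h2c hs
    rcases le_total (B x y) (B y z) with h1 | h1 <;> rcases le_total (B y z) (B z x) with h2 | h2 <;>
      rcases le_total (B x y) (B z x) with h3 | h3
    · exact ⟨[], z, x, by rw [mutateList_nil]; push_cast; omega⟩
    · exact ⟨[], y, z, by rw [mutateList_nil]; push_cast; omega⟩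
    · exact ⟨[], y, z, by rw [mutateList_nil]; push_cast; omega⟩
    · exact ⟨[], y, z, by rw [mutateList_nil]; push_cast; omega⟩
    · exact ⟨[], z, x, by rw [mutateList_nil]; push_cast; omega⟩
    · exact ⟨[], x, y, by rw [mutateList_nil]; push_cast; omega⟩
    · exact ⟨[], y, z, by rw [mutateList_nil]; push_cast; omega⟩
    · exact ⟨[], x, y, by rw [mutateList_nil]; push_cast; omega⟩
  | succ j ih =>
    intro n B hB x y z hxy hyz hxz h2a h2b h2c hs
    have key : ∀ x' y' z' : Fin n, x' ≠ y' → y' ≠ z' → x' ≠ z' →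
        2 ≤ B x' y' → 2 ≤ B y' z' → 2 ≤ B z' x' →
        B y' z' ≤ B x' y' → B y' z' ≤ B z' x' →
        7 ≤ B x' y' + B y' z' + B z' x' →
        ∃ (l : List (Fin n)) (i₁ j₁ : Fin n),
          B x' y' + B y' z' + B z' x' + ((j:ℤ)+1) ≤ 3 * mutateList B l i₁ j₁ := by
      intro x' y' z' hxy' hyz' hxz' h2a' h2b' h2c' hba' hbc' hs'
      obtain ⟨e1, e2, e3, hsum⟩ := growth_core hB hxy' hyz' hxz' h2a' h2b' h2c' hba' hbc' hs'
      have harith := arith_core h2a' h2b' h2c' hba' hbc' hs'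
      have hB' : IsSkewQ (mutate B x') := hB.mutate_skew x'
      have h2a'' : 2 ≤ (mutate B x') x' z' := by omega
      have h2b'' : 2 ≤ (mutate B x') z' y' := by omega
      have h2c'' : 2 ≤ (mutate B x') y' x' := by omega
      have hs'' : 7 ≤ (mutate B x') x' z' + (mutate B x') z' y' + (mutate B x') y' x' := by omega
      obtain ⟨l, i₁, j₁, hle⟩ := ih (mutate B x') hB' x' z' y' hxz' (Ne.symm hyz') hxy'
        h2a'' h2b'' h2c'' hs''
      refine ⟨x' :: l, i₁, j₁, ?_⟩
      rw [mutateList_cons]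
      push_cast at hle ⊢
      omega
    have hcast : ((j+1 : ℕ) : ℤ) = (j:ℤ) + 1 := by push_cast; ring
    rcases le_total (B y z) (B x y) with h1 | h1 <;> rcases le_total (B y z) (B z x) with h2 | h2
    · obtain ⟨l, i₁, j₁, hle⟩ := key x y z hxy hyz hxz h2a h2b h2c h1 h2 hs
      exact ⟨l, i₁, j₁, by rw [hcast]; omega⟩
    · obtain ⟨l, i₁, j₁, hle⟩ := key y z x hyz hxz.symm hxy.symm h2b h2c h2a (by omega) (by omega)
        (by omega)
      exact ⟨l, i₁, j₁, by rw [hcast]; omega⟩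
    · obtain ⟨l, i₁, j₁, hle⟩ := key z x y hxz.symm hxy hyz.symm h2c h2a h2b (by omega) (by omega)
        (by omega)
      exact ⟨l, i₁, j₁, by rw [hcast]; omega⟩
    · rcases le_total (B x y) (B z x) with h3 | h3
      · obtain ⟨l, i₁, j₁, hle⟩ := key z x y hxz.symm hxy hyz.symm h2c h2a h2b (by omega)
          (by omega) (by omega)
        exact ⟨l, i₁, j₁, by rw [hcast]; omega⟩
      · obtain ⟨l, i₁, j₁, hle⟩ := key y z x hyz hxz.symm hxy.symm h2b h2c h2a (by omega)
          (by omega) (by omega)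
        exact ⟨l, i₁, j₁, by rw [hcast]; omega⟩

/-- A "good triple" forces unbounded growth. -/
lemma gt_unb {B : Matrix (Fin n) (Fin n) ℤ} (hB : IsSkewQ B) {x y z : Fin n}
    (hxy : x ≠ y) (hyz : y ≠ z) (hxz : x ≠ z)
    (h2a : 2 ≤ B x y) (h2b : 2 ≤ B y z) (h2c : 2 ≤ B z x)
    (hs : 7 ≤ B x y + B y z + B z x) : Unb B := by
  intro N
  obtain ⟨l, i₁, j₁, hle⟩ :=
    growth_aux (3*N).toNat B hB x y z hxy hyz hxz h2a h2b h2c hs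
  refine ⟨l, i₁, j₁, ?_⟩
  have := Int.self_le_toNat (3*N)
  omega

end AuxGrowth

section AuxConf

variable {n : ℕ}

/-- The configuration: an oriented cycle of length `m` (listed periodically by `v`)
all of whose arrows have weight 1, together with a vertex `k` off the cycle which is
adjacent (with weights `±1`) to an odd number (at least 3) of cycle vertices. -/
structure Conf (B : Matrix (Fin n) (Fin n) ℤ) (k : Fin n) (m : ℕ) (v : ℕ → Fin n) : Prop where
  hm : 3 ≤ m
  hper : ∀ i, v (i + m) = v i
  hinj : ∀ i j, v i = v j → i % m = j % m
  hvk : ∀ i, v i ≠ k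
  hedge : ∀ i, B (v i) (v (i+1)) = 1
  hzero : ∀ i j, j % m ≠ (i+1) % m → i % m ≠ (j+1) % m → i % m ≠ j % m → B (v i) (v j) = 0
  hsp : ∀ i, B k (v i) = 1 ∨ B k (v i) = -1 ∨ B k (v i) = 0
  hodd : Odd (((Finset.range m).filter (fun i => B k (v i) ≠ 0)).card)
  hc3 : 3 ≤ ((Finset.range m).filter (fun i => B k (v i) ≠ 0)).card

lemma periodic_mod {α : Sort*} {m : ℕ} (hm : 0 < m) (f : ℕ → α)
    (hper : ∀ i, f (i + m) = f i) : ∀ i, f i = f (i % m) := by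
  intro i
  induction i using Nat.strong_induction_on with
  | _ i ih =>
    rcases Nat.lt_or_ge i m with h | h
    · rw [Nat.mod_eq_of_lt h]
    · have h1 : i - m + m = i := by omega
      have h2 := hper (i - m)
      rw [h1] at h2
      rw [h2, ih (i - m) (by omega), Nat.mod_eq_sub_mod h]

lemma mod_succ_cases {m p : ℕ} (hm : 0 < m) (hp : p < m) :
    ((p+1) % m = p + 1 ∧ p + 1 < m) ∨ (p = m - 1 ∧ (p+1) % m = 0) := by
  rcases Nat.lt_or_ge (p+1) m with h | h
  · exact Or.inl ⟨Nat.mod_eq_of_lt h, h⟩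
  · exact Or.inr ⟨by omega, by rw [show p+1 = m by omega, Nat.mod_self]⟩

lemma succ_mod_mod {m : ℕ} (hm : 2 ≤ m) (i : ℕ) : (i+1) % m = (i % m + 1) % m := by
  conv_lhs => rw [Nat.add_mod i 1 m, Nat.mod_eq_of_lt (show 1 < m by omega)]

namespace Conf

variable {B : Matrix (Fin n) (Fin n) ℤ} {k : Fin n} {m : ℕ} {v : ℕ → Fin n}

lemma hm0 (hC : Conf B k m v) : 0 < m := by have := hC.hm; omega

lemma vmod (hC : Conf B k m v) (i : ℕ) : v i = v (i % m) :=
  periodic_mod hC.hm0 v hC.hper i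

lemma vne (hC : Conf B k m v) {a b : ℕ} (ha : a < m) (hb : b < m) (hab : a ≠ b) :
    v a ≠ v b := fun h =>
  hab (by rw [← Nat.mod_eq_of_lt ha, ← Nat.mod_eq_of_lt hb]; exact hC.hinj a b h)

lemma zero' (hC : Conf B k m v) {a b : ℕ} (ha : a < m) (hb : b < m)
    (h1 : b ≠ a + 1) (h2 : a ≠ b + 1) (h3 : a ≠ b)
    (h4 : a = m - 1 → b ≠ 0) (h5 : b = m - 1 → a ≠ 0) :
    B (v a) (v b) = 0 := by
  have hm := hC.hm
  apply hC.hzero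
  · rw [Nat.mod_eq_of_lt hb]
    rcases mod_succ_cases hC.hm0 ha with ⟨e, _⟩ | ⟨e, e'⟩
    · rw [e]; exact h1
    · rw [e']; exact h4 e
  · rw [Nat.mod_eq_of_lt ha]
    rcases mod_succ_cases hC.hm0 hb with ⟨e, _⟩ | ⟨e, e'⟩
    · rw [e]; exact h2
    · rw [e']; exact h5 e
  · rw [Nat.mod_eq_of_lt ha, Nat.mod_eq_of_lt hb]; exact h3

lemma card_shift {m s : ℕ} (hm : 0 < m) (P : ℕ → Prop) [DecidablePred P]
    [DecidablePred (fun i => P (i + s))] (hP : ∀ i, P (i % m) ↔ P i) :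
    ((Finset.range m).filter (fun i => P (i + s))).card
      = ((Finset.range m).filter P).card := by
  apply Finset.card_bij (fun a _ => (a + s) % m)
  · intro a ha
    simp only [Finset.mem_filter, Finset.mem_range] at ha ⊢
    exact ⟨Nat.mod_lt _ hm, (hP (a+s)).mpr ha.2⟩
  · intro a ha b hb h
    simp only [Finset.mem_filter, Finset.mem_range] at ha hb
    have h' : Nat.ModEq m (a + s) (b + s) := h
    have := Nat.ModEq.add_right_cancel' s h'
    rwa [Nat.ModEq, Nat.mod_eq_of_lt ha.1, Nat.mod_eq_of_lt hb.1] at this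
  · intro b hb
    simp only [Finset.mem_filter, Finset.mem_range] at hb
    have hms : s ≤ m * s := Nat.le_mul_of_pos_left s hm
    have key : ((b + m * s - s) % m + s) % m = b := by
      rw [Nat.mod_add_mod, show b + m * s - s + s = b + m * s by omega,
        Nat.add_mul_mod_self_left, Nat.mod_eq_of_lt hb.1]
    refine ⟨(b + m * s - s) % m, ?_, key⟩
    simp only [Finset.mem_filter, Finset.mem_range]
    refine ⟨Nat.mod_lt _ hm, ?_⟩
    have := hP ((b + m * s - s) % m + s)
    rw [key] at this
    exact this.mp hb.2

lemma card_rev {m : ℕ} (hm : 0 < m) (P Q : ℕ → Prop) [DecidablePred P] [DecidablePred Q]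
    (hPQ : ∀ a, a < m → (Q a ↔ P (m - 1 - a))) :
    ((Finset.range m).filter Q).card = ((Finset.range m).filter P).card := by
  apply Finset.card_bij (fun a _ => m - 1 - a)
  · intro a ha
    simp only [Finset.mem_filter, Finset.mem_range] at ha ⊢
    exact ⟨by omega, (hPQ a ha.1).mp ha.2⟩
  · intro a ha b hb h
    simp only [Finset.mem_filter, Finset.mem_range] at ha hb
    omega
  · intro b hb
    simp only [Finset.mem_filter, Finset.mem_range] at hb
    refine ⟨m - 1 - b, ?_, by omega⟩
    simp only [Finset.mem_filter, Finset.mem_range]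
    refine ⟨by omega, (hPQ _ (by omega)).mpr ?_⟩
    rw [show m - 1 - (m - 1 - b) = b by omega]
    exact hb.2

/-- Rotating the cycle. -/
lemma shift (hC : Conf B k m v) (s : ℕ) : Conf B k m (fun i => v (i + s)) where
  hm := hC.hm
  hper := fun i => by
    show v (i + m + s) = v (i + s)
    rw [show i + m + s = (i + s) + m by omega]; exact hC.hper _
  hinj := fun i j h => by
    have h' := hC.hinj _ _ h
    exact Nat.ModEq.add_right_cancel' s h'
  hvk := fun i => hC.hvk _
  hedge := fun i => by
    show B (v (i + s)) (v (i + 1 + s)) = 1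
    rw [show i + 1 + s = (i + s) + 1 by omega]; exact hC.hedge _
  hzero := fun i j h1 h2 h3 => by
    apply hC.hzero (i + s) (j + s)
    · intro heq
      rw [show i + s + 1 = (i + 1) + s by omega] at heq
      exact h1 (Nat.ModEq.add_right_cancel' s heq)
    · intro heq
      rw [show j + s + 1 = (j + 1) + s by omega] at heq
      exact h2 (Nat.ModEq.add_right_cancel' s heq)
    · intro heq
      exact h3 (Nat.ModEq.add_right_cancel' s heq)
  hsp := fun i => hC.hsp _
  hodd := by
    show Odd (((Finset.range m).filter (fun i => B k (v (i + s)) ≠ 0)).card)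
    have h2 : ((Finset.range m).filter (fun i => B k (v (i + s)) ≠ 0)).card
        = ((Finset.range m).filter (fun i => B k (v i) ≠ 0)).card :=
      card_shift hC.hm0 (fun i => B k (v i) ≠ 0)
        (fun i => by show B k (v (i % m)) ≠ 0 ↔ B k (v i) ≠ 0; rw [← hC.vmod i])
    rw [h2]; exact hC.hodd
  hc3 := by
    show 3 ≤ ((Finset.range m).filter (fun i => B k (v (i + s)) ≠ 0)).card
    have h2 : ((Finset.range m).filter (fun i => B k (v (i + s)) ≠ 0)).card
        = ((Finset.range m).filter (fun i => B k (v i) ≠ 0)).card :=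
      card_shift hC.hm0 (fun i => B k (v i) ≠ 0)
        (fun i => by show B k (v (i % m)) ≠ 0 ↔ B k (v i) ≠ 0; rw [← hC.vmod i])
    rw [h2]; exact hC.hc3

/-- Reversing the cycle and negating the matrix. -/
lemma neg_rev (hC : Conf B k m v) (hB : IsSkewQ B) :
    Conf (-B) k m (fun i => v (m - 1 - i % m)) where
  hm := hC.hm
  hper := fun i => by
    show v (m - 1 - (i + m) % m) = v (m - 1 - i % m)
    rw [Nat.add_mod_right]
  hinj := fun i j h => by
    have hp : i % m < m := Nat.mod_lt _ hC.hm0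
    have hq : j % m < m := Nat.mod_lt _ hC.hm0
    have h' := hC.hinj _ _ h
    rw [Nat.mod_eq_of_lt (show m - 1 - i % m < m by omega),
      Nat.mod_eq_of_lt (show m - 1 - j % m < m by omega)] at h'
    omega
  hvk := fun i => hC.hvk _
  hedge := fun i => by
    have hp : i % m < m := Nat.mod_lt _ hC.hm0
    have hm3 := hC.hm
    show (-B) (v (m - 1 - i % m)) (v (m - 1 - (i + 1) % m)) = 1
    rw [succ_mod_mod (by omega) i]
    rcases mod_succ_cases hC.hm0 hp with ⟨e, l⟩ | ⟨e, e'⟩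
    · rw [e, show m - 1 - (i % m + 1) = m - 2 - i % m by omega]
      have h1 := hC.hedge (m - 2 - i % m)
      have h2 := hB (v (m - 2 - i % m)) (v (m - 2 - i % m + 1))
      rw [show m - 1 - i % m = m - 2 - i % m + 1 by omega]
      simp only [Matrix.neg_apply]
      rw [h2, h1]; ring
    · rw [e', e]
      have h1 := hC.hedge (m - 1)
      have hv0 : v (m - 1 + 1) = v 0 := by
        rw [show m - 1 + 1 = 0 + m by omega]; exact hC.hper 0
      rw [hv0] at h1
      have h2 := hB (v (m - 1)) (v 0)
      simp only [Matrix.neg_apply]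
      rw [show m - 1 - (m - 1) = 0 by omega, show m - 1 - 0 = m - 1 by omega, h2, h1]; ring
  hzero := fun i j h1 h2 h3 => by
    have hm3 := hC.hm
    have hp : i % m < m := Nat.mod_lt _ hC.hm0
    have hq : j % m < m := Nat.mod_lt _ hC.hm0
    rw [succ_mod_mod (by omega) i] at h1
    rw [succ_mod_mod (by omega) j] at h2
    show (-B) (v (m - 1 - i % m)) (v (m - 1 - j % m)) = 0
    simp only [Matrix.neg_apply, neg_eq_zero]
    rcases mod_succ_cases hC.hm0 hp with ⟨e1, l1⟩ | ⟨e1, e1'⟩ <;>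
      rcases mod_succ_cases hC.hm0 hq with ⟨e2, l2⟩ | ⟨e2, e2'⟩
    · rw [e1] at h1; rw [e2] at h2
      exact hC.zero' (by omega) (by omega) (by omega) (by omega) (by omega)
        (fun h => by omega) (fun h => by omega)
    · rw [e1] at h1; rw [e2'] at h2
      exact hC.zero' (by omega) (by omega) (by omega) (by omega) (by omega)
        (fun h => by omega) (fun h => by omega)
    · rw [e1'] at h1; rw [e2] at h2
      exact hC.zero' (by omega) (by omega) (by omega) (by omega) (by omega)
        (fun h => by omega) (fun h => by omega)
    · rw [e1'] at h1; rw [e2'] at h2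
      exact hC.zero' (by omega) (by omega) (by omega) (by omega) (by omega)
        (fun h => by omega) (fun h => by omega)
  hsp := fun i => by
    rcases hC.hsp (m - 1 - i % m) with h | h | h
    · exact Or.inr (Or.inl (by simp [h]))
    · exact Or.inl (by simp [h])
    · exact Or.inr (Or.inr (by simp [h]))
  hodd := by
    show Odd (((Finset.range m).filter (fun i => (-B) k (v (m - 1 - i % m)) ≠ 0)).card)
    have h2 : ((Finset.range m).filter (fun i => (-B) k (v (m - 1 - i % m)) ≠ 0)).card
        = ((Finset.range m).filter (fun i => B k (v i) ≠ 0)).card :=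
      card_rev hC.hm0 (fun i => B k (v i) ≠ 0)
        (fun a => (-B) k (v (m - 1 - a % m)) ≠ 0)
        (fun a ha => by
          show (-B) k (v (m - 1 - a % m)) ≠ 0 ↔ B k (v (m - 1 - a)) ≠ 0
          rw [Nat.mod_eq_of_lt ha]; simp)
    rw [h2]; exact hC.hodd
  hc3 := by
    show 3 ≤ ((Finset.range m).filter (fun i => (-B) k (v (m - 1 - i % m)) ≠ 0)).card
    have h2 : ((Finset.range m).filter (fun i => (-B) k (v (m - 1 - i % m)) ≠ 0)).card
        = ((Finset.range m).filter (fun i => B k (v i) ≠ 0)).card :=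
      card_rev hC.hm0 (fun i => B k (v i) ≠ 0)
        (fun a => (-B) k (v (m - 1 - a % m)) ≠ 0)
        (fun a ha => by
          show (-B) k (v (m - 1 - a % m)) ≠ 0 ↔ B k (v (m - 1 - a)) ≠ 0
          rw [Nat.mod_eq_of_lt ha]; simp)
    rw [h2]; exact hC.hc3

end Conf

end AuxConf

section AuxDelete

variable {n : ℕ}

namespace Conf

/-- Contracting an arc: deleting a cycle vertex not adjacent to `k` by mutating at it. -/
lemma delete {B : Matrix (Fin n) (Fin n) ℤ} {k : Fin n} {m : ℕ} {v : ℕ → Fin n}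
    (hC : Conf B k m v) (hB : IsSkewQ B) (hm4 : 4 ≤ m) (hz : B k (v (m-1)) = 0) :
    Conf (mutate B (v (m-1))) k (m-1) (fun j => v (j % (m-1))) := by
  have hm0 : 0 < m := by omega
  have hm0' : 0 < m - 1 := by omega
  have hvm : v m = v 0 := by have := hC.hper 0; rwa [Nat.zero_add] at this
  have hE : B (v (m-1)) (v 0) = 1 := by
    have := hC.hedge (m-1); rwa [show m-1+1 = m by omega, hvm] at this
  have f0 : B (v 0) (v (m-1)) = -1 := by rw [hB (v (m-1)) (v 0), hE]
  have fm2 : B (v (m-2)) (v (m-1)) = 1 := by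
    have := hC.hedge (m-2); rwa [show m-2+1 = m-1 by omega] at this
  have hw1 : B (v (m-1)) (v 1) = 0 :=
    hC.zero' (by omega) (by omega) (by omega) (by omega) (by omega)
      (fun _ => by omega) (fun _ => by omega)
  have hne : ∀ p, p < m - 1 → v p ≠ v (m-1) := fun p hp =>
    hC.vne (by omega) (by omega) (by omega)
  have hkw : k ≠ v (m-1) := (hC.hvk (m-1)).symm
  -- generic vanishing of the edges to the deleted vertex
  have hvpw : ∀ p, p < m - 1 → p ≠ 0 → p ≠ m - 2 → B (v p) (v (m-1)) = 0 := fun p hp h1 h2 =>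
    hC.zero' (by omega) (by omega) (by omega) (by omega) (by omega)
      (fun _ => by omega) (fun _ => by omega)
  have hwvq : ∀ q, q < m - 1 → q ≠ 0 → q ≠ m - 2 → B (v (m-1)) (v q) = 0 := fun q hq h1 h2 =>
    hC.zero' (by omega) (by omega) (by omega) (by omega) (by omega)
      (fun _ => by omega) (fun _ => by omega)
  have hBk : ∀ p, p < m - 1 → (mutate B (v (m-1))) k (v p) = B k (v p) := by
    intro p hp
    rw [mutate_apply B (v (m-1)) k (v p) hkw (hne p hp), hz]
    simp
  refine ⟨by omega, ?_, ?_, fun i => hC.hvk _, ?_, ?_, ?_, ?_, ?_⟩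
  · intro i
    show v ((i + (m-1)) % (m-1)) = v (i % (m-1))
    rw [Nat.add_mod_right]
  · intro i j h
    have hp : i % (m-1) < m - 1 := Nat.mod_lt _ hm0'
    have hq : j % (m-1) < m - 1 := Nat.mod_lt _ hm0'
    have h' := hC.hinj _ _ h
    rw [Nat.mod_eq_of_lt (show i % (m-1) < m by omega),
      Nat.mod_eq_of_lt (show j % (m-1) < m by omega)] at h'
    omega
  · -- hedge
    intro j
    have hp : j % (m-1) < m - 1 := Nat.mod_lt _ hm0'
    show (mutate B (v (m-1))) (v (j % (m-1))) (v ((j+1) % (m-1))) = 1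
    rw [succ_mod_mod (show 2 ≤ m - 1 by omega) j]
    rcases mod_succ_cases hm0' hp with ⟨e, l⟩ | ⟨e, e'⟩
    · rw [e]
      rw [mutate_apply B (v (m-1)) _ _ (hne _ hp) (hne _ l)]
      have hprod : B (v (j % (m-1))) (v (m-1)) * B (v (m-1)) (v (j % (m-1) + 1)) = 0 := by
        rcases eq_or_ne (j % (m-1)) 0 with h0 | h0
        · rw [h0, show (0:ℕ)+1 = 1 from rfl, hw1, mul_zero]
        · rw [hvpw _ hp h0 (by omega), zero_mul]
      rw [hprod]
      simp [hC.hedge (j % (m-1))]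
    · rw [e', e, show m-1-1 = m-2 by omega]
      rw [mutate_apply B (v (m-1)) _ _ (hne _ (by omega)) (hne _ (by omega))]
      have hz0 : B (v (m-2)) (v 0) = 0 :=
        hC.zero' (by omega) (by omega) (by omega) (by omega) (by omega)
          (fun _ => by omega) (fun _ => by omega)
      rw [hz0, fm2, hE]
      norm_num
  · -- hzero
    intro i j h1 h2 h3
    have hp : i % (m-1) < m - 1 := Nat.mod_lt _ hm0'
    have hq : j % (m-1) < m - 1 := Nat.mod_lt _ hm0'
    rw [succ_mod_mod (show 2 ≤ m - 1 by omega) i] at h1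
    rw [succ_mod_mod (show 2 ≤ m - 1 by omega) j] at h2
    show (mutate B (v (m-1))) (v (i % (m-1))) (v (j % (m-1))) = 0
    set p := i % (m-1) with hpdef
    set q := j % (m-1) with hqdef
    have h1' : q ≠ p + 1 := by
      intro he
      exact h1 (by rw [Nat.mod_eq_of_lt (show p+1 < m-1 by omega)]; omega)
    have h2' : p ≠ q + 1 := by
      intro he
      exact h2 (by rw [Nat.mod_eq_of_lt (show q+1 < m-1 by omega)]; omega)
    have hx1 : ¬(p = m-2 ∧ q = 0) := by
      rintro ⟨ha, hb⟩
      apply h1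
      rw [ha, show m-2+1 = m-1 by omega, Nat.mod_self, hb]
    have hx2 : ¬(p = 0 ∧ q = m-2) := by
      rintro ⟨ha, hb⟩
      apply h2
      rw [hb, show m-2+1 = m-1 by omega, Nat.mod_self, ha]
    rw [mutate_apply B (v (m-1)) _ _ (hne _ hp) (hne _ hq)]
    have hmain : B (v p) (v q) = 0 :=
      hC.zero' (by omega) (by omega) (by omega) (by omega) (by omega)
        (fun _ => by omega) (fun _ => by omega)
    have hprod : B (v p) (v (m-1)) * B (v (m-1)) (v q) = 0 := by
      rcases eq_or_ne p 0 with hp0 | hp0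
      · have hq2 : q ≠ m - 2 := fun h => hx2 ⟨hp0, h⟩
        rcases eq_or_ne q 0 with hq0 | hq0
        · omega
        · rw [hwvq q hq hq0 hq2, mul_zero]
      · rcases eq_or_ne p (m-2) with hp2 | hp2
        · have hq0 : q ≠ 0 := fun h => hx1 ⟨hp2, h⟩
          have hq2 : q ≠ m - 2 := by omega
          rw [hwvq q hq hq0 hq2, mul_zero]
        · rw [hvpw p hp hp0 hp2, zero_mul]
    rw [hmain, hprod]
    simp
  · -- hsp
    intro i
    have hp : i % (m-1) < m - 1 := Nat.mod_lt _ hm0'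
    show (mutate B (v (m-1))) k (v (i % (m-1))) = 1 ∨ _ ∨ _
    rw [hBk _ hp]
    exact hC.hsp _
  · -- hodd
    show Odd (((Finset.range (m-1)).filter
      (fun j => (mutate B (v (m-1))) k (v (j % (m-1))) ≠ 0)).card)
    have hfe : (Finset.range (m-1)).filter
        (fun j => (mutate B (v (m-1))) k (v (j % (m-1))) ≠ 0)
        = (Finset.range (m-1)).filter (fun j => B k (v j) ≠ 0) := by
      apply Finset.filter_congr
      intro j hj
      rw [Finset.mem_range] at hj
      rw [Nat.mod_eq_of_lt hj, hBk _ hj]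
    rw [hfe]
    have hfil : (Finset.range m).filter (fun i => B k (v i) ≠ 0)
        = (Finset.range (m-1)).filter (fun i => B k (v i) ≠ 0) := by
      conv_lhs => rw [show m = (m-1)+1 by omega]
      rw [Finset.range_add_one, Finset.filter_insert, if_neg (by simpa using hz)]
    have := hC.hodd
    rwa [hfil] at this
  · -- hc3
    show 3 ≤ ((Finset.range (m-1)).filter
      (fun j => (mutate B (v (m-1))) k (v (j % (m-1))) ≠ 0)).card
    have hfe : (Finset.range (m-1)).filter
        (fun j => (mutate B (v (m-1))) k (v (j % (m-1))) ≠ 0)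
        = (Finset.range (m-1)).filter (fun j => B k (v j) ≠ 0) := by
      apply Finset.filter_congr
      intro j hj
      rw [Finset.mem_range] at hj
      rw [Nat.mod_eq_of_lt hj, hBk _ hj]
    rw [hfe]
    have hfil : (Finset.range m).filter (fun i => B k (v i) ≠ 0)
        = (Finset.range (m-1)).filter (fun i => B k (v i) ≠ 0) := by
      conv_lhs => rw [show m = (m-1)+1 by omega]
      rw [Finset.range_add_one, Finset.filter_insert, if_neg (by simpa using hz)]
    have := hC.hc3
    rwa [hfil] at this

end Conf

end AuxDelete

section AuxBase

variable {n : ℕ}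

lemma wheel3 {B : Matrix (Fin n) (Fin n) ℤ} {k : Fin n} {v : ℕ → Fin n}
    (hB : IsSkewQ B) (hC : Conf B k 3 v)
    (h0 : B k (v 0) = 1) (h1 : B k (v 1) = 1)
    (h2 : B k (v 2) = 1 ∨ B k (v 2) = -1) :
    Unb B := by
  have d01 : v 0 ≠ v 1 := hC.vne (by omega) (by omega) (by omega)
  have d02 : v 0 ≠ v 2 := hC.vne (by omega) (by omega) (by omega)
  have d12 : v 1 ≠ v 2 := hC.vne (by omega) (by omega) (by omega)
  have k0 : v 0 ≠ k := hC.hvk 0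
  have k1 : v 1 ≠ k := hC.hvk 1
  have k2 : v 2 ≠ k := hC.hvk 2
  have e01 : B (v 0) (v 1) = 1 := by simpa using hC.hedge 0
  have e12 : B (v 1) (v 2) = 1 := by simpa using hC.hedge 1
  have hv3 : v 3 = v 0 := by simpa using hC.hper 0
  have e20 : B (v 2) (v 0) = 1 := by have := hC.hedge 2; rwa [hv3] at this
  have e10 : B (v 1) (v 0) = -1 := by rw [hB (v 0) (v 1), e01]
  have e21 : B (v 2) (v 1) = -1 := by rw [hB (v 1) (v 2), e12]
  have e02 : B (v 0) (v 2) = -1 := by rw [hB (v 2) (v 0), e20]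
  have r0 : B (v 0) k = -1 := by rw [hB k (v 0), h0]
  have r1 : B (v 1) k = -1 := by rw [hB k (v 1), h1]
  set g : Fin 4 → Fin n := ![v 0, v 1, v 2, k] with hg
  have ginj : Function.Injective g := by
    intro a b hab
    fin_cases a <;> fin_cases b <;>
      simp only [hg, Matrix.cons_val_zero, Matrix.cons_val_one, Matrix.head_cons,
        Matrix.cons_val_two, Matrix.tail_cons, Matrix.cons_val_three, Matrix.head_fin_const,
        Fin.mk_zero, Fin.mk_one, Fin.isValue] at hab ⊢ <;>
      first
        | rfl
        | exact absurd hab d01 | exact absurd hab d02 | exact absurd hab d12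
        | exact absurd hab d01.symm | exact absurd hab d02.symm | exact absurd hab d12.symm
        | exact absurd hab k0 | exact absurd hab k1 | exact absurd hab k2
        | exact absurd hab k0.symm | exact absurd hab k1.symm | exact absurd hab k2.symm
  rcases h2 with h2 | h2
  · have r2 : B (v 2) k = -1 := by rw [hB k (v 2), h2]
    have hsub : B.submatrix g g = !![0,1,-1,-1; -1,0,1,-1; 1,-1,0,-1; 1,1,1,0] := by
      ext i j
      fin_cases i <;> fin_cases j <;>
        simp [hg, Matrix.submatrix_apply, hB.diag, e01, e12, e20, e10, e21, e02,
          h0, h1, h2, r0, r1, r2, Matrix.vecHead, Matrix.vecTail]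
    have hmut := mutateList_submatrix B g ginj [0,1,3,1]
    rw [hsub] at hmut
    have hdec :
        (2:ℤ) ≤ mutateList !![0,1,-1,-1; -1,0,1,-1; 1,-1,0,-1; 1,1,1,0] [0,1,3,1] 1 3 ∧
        (2:ℤ) ≤ mutateList !![0,1,-1,-1; -1,0,1,-1; 1,-1,0,-1; 1,1,1,0] [0,1,3,1] 3 2 ∧
        (2:ℤ) ≤ mutateList !![0,1,-1,-1; -1,0,1,-1; 1,-1,0,-1; 1,1,1,0] [0,1,3,1] 2 1 ∧
        (7:ℤ) ≤ mutateList !![0,1,-1,-1; -1,0,1,-1; 1,-1,0,-1; 1,1,1,0] [0,1,3,1] 1 3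
          + mutateList !![0,1,-1,-1; -1,0,1,-1; 1,-1,0,-1; 1,1,1,0] [0,1,3,1] 3 2
          + mutateList !![0,1,-1,-1; -1,0,1,-1; 1,-1,0,-1; 1,1,1,0] [0,1,3,1] 2 1 := by
      refine ⟨?_, ?_, ?_, ?_⟩ <;> decide
    rw [hmut] at hdec
    simp only [Matrix.submatrix_apply] at hdec
    apply unb_prepend B ([0,1,3,1].map g)
    exact gt_unb (hB.mutateList_skew _) (ginj.ne (by decide : (1:Fin 4) ≠ 3))
      (ginj.ne (by decide : (3:Fin 4) ≠ 2)) (ginj.ne (by decide : (1:Fin 4) ≠ 2))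
      hdec.1 hdec.2.1 hdec.2.2.1 hdec.2.2.2
  · have r2 : B (v 2) k = 1 := by rw [hB k (v 2), h2]; norm_num
    have hsub : B.submatrix g g = !![0,1,-1,-1; -1,0,1,-1; 1,-1,0,1; 1,1,-1,0] := by
      ext i j
      fin_cases i <;> fin_cases j <;>
        simp [hg, Matrix.submatrix_apply, hB.diag, e01, e12, e20, e10, e21, e02,
          h0, h1, h2, r0, r1, r2, Matrix.vecHead, Matrix.vecTail]
    have hmut := mutateList_submatrix B g ginj [0,2,3]
    rw [hsub] at hmut
    have hdec :
        (2:ℤ) ≤ mutateList !![0,1,-1,-1; -1,0,1,-1; 1,-1,0,1; 1,1,-1,0] [0,2,3] 0 1 ∧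
        (2:ℤ) ≤ mutateList !![0,1,-1,-1; -1,0,1,-1; 1,-1,0,1; 1,1,-1,0] [0,2,3] 1 3 ∧
        (2:ℤ) ≤ mutateList !![0,1,-1,-1; -1,0,1,-1; 1,-1,0,1; 1,1,-1,0] [0,2,3] 3 0 ∧
        (7:ℤ) ≤ mutateList !![0,1,-1,-1; -1,0,1,-1; 1,-1,0,1; 1,1,-1,0] [0,2,3] 0 1
          + mutateList !![0,1,-1,-1; -1,0,1,-1; 1,-1,0,1; 1,1,-1,0] [0,2,3] 1 3
          + mutateList !![0,1,-1,-1; -1,0,1,-1; 1,-1,0,1; 1,1,-1,0] [0,2,3] 3 0 := by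
      refine ⟨?_, ?_, ?_, ?_⟩ <;> decide
    rw [hmut] at hdec
    simp only [Matrix.submatrix_apply] at hdec
    apply unb_prepend B ([0,2,3].map g)
    exact gt_unb (hB.mutateList_skew _) (ginj.ne (by decide : (0:Fin 4) ≠ 1))
      (ginj.ne (by decide : (1:Fin 4) ≠ 3)) (ginj.ne (by decide : (0:Fin 4) ≠ 3))
      hdec.1 hdec.2.1 hdec.2.2.1 hdec.2.2.2

end AuxBase

section AuxWheel

variable {n : ℕ}

lemma wheel_main {B : Matrix (Fin n) (Fin n) ℤ} {k : Fin n} {m : ℕ} {v : ℕ → Fin n}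
    (hB : IsSkewQ B) (hC : Conf B k m v) (hm5 : 5 ≤ m) (hOdd : Odd m)
    (hall : ∀ i, i < m → B k (v i) = 1 ∨ B k (v i) = -1)
    (h0 : B k (v 0) = 1) (h1 : B k (v 1) = 1) :
    Unb B ∨ Conf (mutate (mutate B (v 0)) (v 1)) k (m-2) (fun j => v (2 + j % (m-2))) := by
  have hm0 : 0 < m := by omega
  have hne : ∀ a b : ℕ, a < m → b < m → a ≠ b → v a ≠ v b := fun a b ha hb hab =>
    hC.vne ha hb hab
  have hk : ∀ a : ℕ, v a ≠ k := hC.hvk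
  have hk' : ∀ a : ℕ, k ≠ v a := fun a => (hC.hvk a).symm
  have e01 : B (v 0) (v 1) = 1 := by simpa using hC.hedge 0
  have e12 : B (v 1) (v 2) = 1 := by simpa using hC.hedge 1
  have hvm : v m = v 0 := by simpa using hC.hper 0
  have elast0 : B (v (m-1)) (v 0) = 1 := by
    have := hC.hedge (m-1); rwa [show m-1+1 = m by omega, hvm] at this
  have e10 : B (v 1) (v 0) = -1 := by rw [hB (v 0) (v 1), e01]
  have e0last : B (v 0) (v (m-1)) = -1 := by rw [hB (v (m-1)) (v 0), elast0]
  have hv0a : ∀ a, 2 ≤ a → a ≤ m-2 → B (v 0) (v a) = 0 := fun a ha1 ha2 =>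
    hC.zero' (by omega) (by omega) (by omega) (by omega) (by omega)
      (fun _ => by omega) (fun _ => by omega)
  have hva0 : ∀ a, 2 ≤ a → a ≤ m-2 → B (v a) (v 0) = 0 := fun a ha1 ha2 =>
    hC.zero' (by omega) (by omega) (by omega) (by omega) (by omega)
      (fun _ => by omega) (fun _ => by omega)
  have hv1a : ∀ a, 3 ≤ a → a ≤ m-1 → B (v 1) (v a) = 0 := fun a ha1 ha2 =>
    hC.zero' (by omega) (by omega) (by omega) (by omega) (by omega)
      (fun _ => by omega) (fun _ => by omega)
  have hgen : ∀ a b, 2 ≤ a → a ≤ m-1 → 2 ≤ b → b ≤ m-1 → b ≠ a+1 → a ≠ b+1 → a ≠ b →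
      B (v a) (v b) = 0 := fun a b ha1 ha2 hb1 hb2 hab1 hab2 hab =>
    hC.zero' (by omega) (by omega) (by omega) (by omega) (by omega)
      (fun _ => by omega) (fun _ => by omega)
  set B1 := mutate B (v 0) with hB1def
  have hB1 : IsSkewQ B1 := hB.mutate_skew (v 0)
  have q1 : B1 k (v 1) = 2 := by
    rw [hB1def, mutate_apply B (v 0) k (v 1) (hk' 0) (hne 1 0 (by omega) (by omega) (by omega)),
      h1, h0, e01]
    decide
  have qgen : ∀ a, 2 ≤ a → a ≤ m-2 → B1 k (v a) = B k (v a) := by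
    intro a ha1 ha2
    rw [hB1def, mutate_apply B (v 0) k (v a) (hk' 0) (hne a 0 (by omega) (by omega) (by omega)),
      h0, hv0a a ha1 ha2]
    simp
  have qlast : B1 k (v (m-1)) = B k (v (m-1)) := by
    rw [hB1def,
      mutate_apply B (v 0) k (v (m-1)) (hk' 0) (hne (m-1) 0 (by omega) (by omega) (by omega)),
      h0, e0last]
    simp
  have c12 : B1 (v 1) (v 2) = 1 := by
    rw [hB1def, mutate_apply B (v 0) (v 1) (v 2) (hne 1 0 (by omega) (by omega) (by omega))
      (hne 2 0 (by omega) (by omega) (by omega)), e12, e10, hv0a 2 (by omega) (by omega)]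
    simp
  have c21 : B1 (v 2) (v 1) = -1 := by rw [hB1 (v 1) (v 2), c12]
  have c1last : B1 (v 1) (v (m-1)) = -1 := by
    rw [hB1def, mutate_apply B (v 0) (v 1) (v (m-1)) (hne 1 0 (by omega) (by omega) (by omega))
      (hne (m-1) 0 (by omega) (by omega) (by omega)), hv1a (m-1) (by omega) (by omega),
      e10, e0last]
    simp
  have clast1 : B1 (v (m-1)) (v 1) = 1 := by rw [hB1 (v 1) (v (m-1)), c1last]; norm_num
  have c1a : ∀ a, 3 ≤ a → a ≤ m-2 → B1 (v 1) (v a) = 0 := by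
    intro a ha1 ha2
    rw [hB1def, mutate_apply B (v 0) (v 1) (v a) (hne 1 0 (by omega) (by omega) (by omega))
      (hne a 0 (by omega) (by omega) (by omega)), hv1a a ha1 (by omega), e10,
      hv0a a (by omega) ha2]
    simp
  have ca1 : ∀ a, 3 ≤ a → a ≤ m-2 → B1 (v a) (v 1) = 0 := by
    intro a ha1 ha2
    rw [hB1 (v 1) (v a), c1a a ha1 ha2]; norm_num
  have clast2 : B1 (v (m-1)) (v 2) = 0 := by
    rw [hB1def, mutate_apply B (v 0) (v (m-1)) (v 2) (hne (m-1) 0 (by omega) (by omega)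
      (by omega)) (hne 2 0 (by omega) (by omega) (by omega)),
      hgen (m-1) 2 (by omega) (by omega) (by omega) (by omega) (by omega) (by omega) (by omega),
      elast0, hv0a 2 (by omega) (by omega)]
    simp
  have cgen : ∀ a b, 2 ≤ a → a ≤ m-1 → 2 ≤ b → b ≤ m-1 → a ≠ b →
      B1 (v a) (v b) = B (v a) (v b) := by
    intro a b ha1 ha2 hb1 hb2 hab
    rcases eq_or_ne b (m-1) with hbm | hbm
    · rw [hB1def, mutate_apply B (v 0) (v a) (v b) (hne a 0 (by omega) (by omega) (by omega))
        (hne b 0 (by omega) (by omega) (by omega)), hva0 a ha1 (by omega)]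
      simp
    · rw [hB1def, mutate_apply B (v 0) (v a) (v b) (hne a 0 (by omega) (by omega) (by omega))
        (hne b 0 (by omega) (by omega) (by omega)), hv0a b hb1 (by omega)]
      simp
  have cedge : ∀ a, 2 ≤ a → a ≤ m-2 → B1 (v a) (v (a+1)) = 1 := by
    intro a ha1 ha2
    rw [cgen a (a+1) ha1 (by omega) (by omega) (by omega) (by omega)]
    exact hC.hedge a
  set B2 := mutate B1 (v 1) with hB2def
  have hB2 : IsSkewQ B2 := hB1.mutate_skew (v 1)
  have A2 : B2 k (v 2) = B k (v 2) + 2 := by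
    rw [hB2def, mutate_apply B1 (v 1) k (v 2) (hk' 1) (hne 2 1 (by omega) (by omega) (by omega)),
      qgen 2 (by omega) (by omega), q1, c12]
    simp [show Int.sign 2 = 1 from rfl]
  have C2a : ∀ a, 3 ≤ a → a ≤ m-2 → B2 k (v a) = B k (v a) := by
    intro a ha1 ha2
    rw [hB2def, mutate_apply B1 (v 1) k (v a) (hk' 1) (hne a 1 (by omega) (by omega) (by omega)),
      qgen a (by omega) ha2, q1, c1a a ha1 ha2]
    simp
  have C2last : B2 k (v (m-1)) = B k (v (m-1)) := by
    rw [hB2def,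
      mutate_apply B1 (v 1) k (v (m-1)) (hk' 1) (hne (m-1) 1 (by omega) (by omega) (by omega)),
      qlast, q1, c1last]
    simp [show Int.sign 2 = 1 from rfl]
  have C2all : ∀ a, 3 ≤ a → a ≤ m-1 → B2 k (v a) = B k (v a) := by
    intro a ha1 ha2
    rcases eq_or_ne a (m-1) with h | h
    · rw [h]; exact C2last
    · exact C2a a ha1 (by omega)
  have D2 : ∀ a, 2 ≤ a → a ≤ m-2 → B2 (v a) (v (a+1)) = 1 := by
    intro a ha1 ha2
    rw [hB2def, mutate_apply B1 (v 1) (v a) (v (a+1)) (hne a 1 (by omega) (by omega) (by omega))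
      (hne (a+1) 1 (by omega) (by omega) (by omega)), cedge a ha1 ha2]
    rcases eq_or_ne a 2 with h | h
    · subst h
      rw [c21, c1a 3 (by omega) (by omega)]
      simp
    · rw [ca1 a (by omega) ha2]
      simp
  have E2 : B2 (v (m-1)) (v 2) = 1 := by
    rw [hB2def, mutate_apply B1 (v 1) (v (m-1)) (v 2) (hne (m-1) 1 (by omega) (by omega)
      (by omega)) (hne 2 1 (by omega) (by omega) (by omega)), clast2, clast1, c12]
    simp
  have F2 : ∀ a b, 2 ≤ a → a ≤ m-1 → 2 ≤ b → b ≤ m-1 → b ≠ a+1 → a ≠ b+1 → a ≠ b →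
      (a = m-1 → b ≠ 2) → (a = 2 → b ≠ m-1) → B2 (v a) (v b) = 0 := by
    intro a b ha1 ha2 hb1 hb2 hab1 hab2 hab hx1 hx2
    rw [hB2def, mutate_apply B1 (v 1) (v a) (v b) (hne a 1 (by omega) (by omega) (by omega))
      (hne b 1 (by omega) (by omega) (by omega)),
      cgen a b ha1 ha2 hb1 hb2 hab, hgen a b ha1 ha2 hb1 hb2 hab1 hab2 hab]
    rcases eq_or_ne a 2 with h2a | h2a
    · have hb3 : 3 ≤ b := by omega
      have hbm : b ≤ m-2 := by have := hx2 h2a; omega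
      rw [c1a b (by omega) hbm]
      simp
    · rcases eq_or_ne a (m-1) with ham | ham
      · have hb3 : 3 ≤ b := by have := hx1 ham; omega
        have hbm : b ≤ m-2 := by omega
        rw [c1a b hb3 hbm]
        simp
      · rw [ca1 a (by omega) (by omega)]
        simp
  -- case split on the third spoke
  rcases hall 2 (by omega) with s2 | s2
  · -- growth case
    left
    have A2' : B2 k (v 2) = 3 := by rw [A2, s2]; norm_num
    have d23 : B2 (v 2) (v 3) = 1 := by simpa using D2 2 (by omega) (by omega)
    set B3 := mutate B2 (v 2) with hB3def
    have hB3 : IsSkewQ B3 := hB2.mutate_skew (v 2)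
    have hC23 : B2 k (v 3) = B k (v 3) := C2all 3 (by omega) (by omega)
    have t2 : B3 (v 2) k = 3 := by
      rw [hB3def, mutate_apply_k B2 (v 2) (v 2) k (Or.inl rfl), hB2 k (v 2), A2']
      norm_num
    have t3 : B3 (v 3) (v 2) = 1 := by
      rw [hB3def, mutate_apply_k B2 (v 2) (v 3) (v 2) (Or.inr rfl), hB2 (v 2) (v 3), d23]
      norm_num
    have t32 : B3 (v 2) (v 3) = -1 := by rw [hB3 (v 3) (v 2), t3]
    have t0 : B3 k (v 2) = -3 := by
      rw [hB3def, mutate_apply_k B2 (v 2) k (v 2) (Or.inr rfl), A2']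
    set B4 := mutate B3 k with hB4def
    have u1 : B4 k (v 2) = 3 := by
      rw [hB4def, mutate_apply_k B3 k k (v 2) (Or.inl rfl), t0]; norm_num
    rcases hall 3 (by omega) with s3 | s3
    · have t1 : B3 k (v 3) = 4 := by
        rw [hB3def,
          mutate_apply B2 (v 2) k (v 3) (hk' 2) (hne 3 2 (by omega) (by omega) (by omega)),
          hC23, s3, A2', d23]
        decide
      have u2 : B4 (v 3) k = 4 := by
        rw [hB4def, mutate_apply_k B3 k (v 3) k (Or.inr rfl), hB3 k (v 3), t1]; norm_num
      have u3 : B4 (v 2) (v 3) = 11 := by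
        rw [hB4def, mutate_apply B3 k (v 2) (v 3) (hk 2) (hk 3), t32, t2, t1]
        decide
      have hGT : Unb B4 :=
        gt_unb (hB3.mutate_skew k) (hk' 2) (hne 2 3 (by omega) (by omega) (by omega))
          (hk' 3) (by omega) (by omega) (by omega) (by omega)
      apply unb_prepend B [v 0, v 1, v 2, k]
      have : mutateList B [v 0, v 1, v 2, k] = B4 := by
        rw [hB4def, hB3def, hB2def, hB1def]; rfl
      rwa [this]
    · have t1 : B3 k (v 3) = 2 := by
        rw [hB3def,
          mutate_apply B2 (v 2) k (v 3) (hk' 2) (hne 3 2 (by omega) (by omega) (by omega)),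
          hC23, s3, A2', d23]
        decide
      have u2 : B4 (v 3) k = 2 := by
        rw [hB4def, mutate_apply_k B3 k (v 3) k (Or.inr rfl), hB3 k (v 3), t1]; norm_num
      have u3 : B4 (v 2) (v 3) = 5 := by
        rw [hB4def, mutate_apply B3 k (v 2) (v 3) (hk 2) (hk 3), t32, t2, t1]
        decide
      have hGT : Unb B4 :=
        gt_unb (hB3.mutate_skew k) (hk' 2) (hne 2 3 (by omega) (by omega) (by omega))
          (hk' 3) (by omega) (by omega) (by omega) (by omega)
      apply unb_prepend B [v 0, v 1, v 2, k]
      have : mutateList B [v 0, v 1, v 2, k] = B4 := by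
        rw [hB4def, hB3def, hB2def, hB1def]; rfl
      rwa [this]
  · -- contraction case
    right
    have A2'' : B2 k (v 2) = 1 := by rw [A2, s2]; norm_num
    have hm20 : 0 < m - 2 := by omega
    refine ⟨by omega, ?_, ?_, fun i => hC.hvk _, ?_, ?_, ?_, ?_, ?_⟩
    · intro i
      show v (2 + (i + (m-2)) % (m-2)) = v (2 + i % (m-2))
      rw [Nat.add_mod_right]
    · intro i j h
      have hp : i % (m-2) < m - 2 := Nat.mod_lt _ hm20
      have hq : j % (m-2) < m - 2 := Nat.mod_lt _ hm20
      have h' := hC.hinj _ _ h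
      rw [Nat.mod_eq_of_lt (show 2 + i % (m-2) < m by omega),
        Nat.mod_eq_of_lt (show 2 + j % (m-2) < m by omega)] at h'
      omega
    · -- hedge
      intro j
      have hp : j % (m-2) < m - 2 := Nat.mod_lt _ hm20
      show B2 (v (2 + j % (m-2))) (v (2 + (j+1) % (m-2))) = 1
      rw [succ_mod_mod (show 2 ≤ m - 2 by omega) j]
      rcases mod_succ_cases hm20 hp with ⟨e, l⟩ | ⟨e, e'⟩
      · rw [e, show 2 + (j % (m-2) + 1) = (2 + j % (m-2)) + 1 by omega]
        exact D2 (2 + j % (m-2)) (by omega) (by omega)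
      · rw [e', e, show 2 + (m-2-1) = m-1 by omega]
        exact E2
    · -- hzero
      intro i j h1' h2' h3'
      have hp : i % (m-2) < m - 2 := Nat.mod_lt _ hm20
      have hq : j % (m-2) < m - 2 := Nat.mod_lt _ hm20
      rw [succ_mod_mod (show 2 ≤ m - 2 by omega) i] at h1'
      rw [succ_mod_mod (show 2 ≤ m - 2 by omega) j] at h2'
      show B2 (v (2 + i % (m-2))) (v (2 + j % (m-2))) = 0
      set p := i % (m-2) with hpdef
      set q := j % (m-2) with hqdef
      have h1a : q ≠ p + 1 := fun he =>
        h1' (by rw [Nat.mod_eq_of_lt (show p+1 < m-2 by omega)]; omega)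
      have h2a : p ≠ q + 1 := fun he =>
        h2' (by rw [Nat.mod_eq_of_lt (show q+1 < m-2 by omega)]; omega)
      have h1b : p = m-3 → q ≠ 0 := by
        intro ha hb
        exact h1' (by rw [ha, show m-3+1 = m-2 by omega, Nat.mod_self]; omega)
      have h2b : q = m-3 → p ≠ 0 := by
        intro ha hb
        exact h2' (by rw [ha, show m-3+1 = m-2 by omega, Nat.mod_self]; omega)
      refine F2 (2 + p) (2 + q) (by omega) (by omega) (by omega) (by omega) (by omega)
        (by omega) (by omega) ?_ ?_
      · intro hA hb2
        exact h1b (by omega) (by omega)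
      · intro hA hb2
        exact h2b (by omega) (by omega)
    · -- hsp
      intro i
      have hp : i % (m-2) < m - 2 := Nat.mod_lt _ hm20
      show B2 k (v (2 + i % (m-2))) = 1 ∨ B2 k (v (2 + i % (m-2))) = -1 ∨ _
      rcases eq_or_ne (i % (m-2)) 0 with h | h
      · rw [h]
        exact Or.inl A2''
      · rw [C2all (2 + i % (m-2)) (by omega) (by omega)]
        rcases hall (2 + i % (m-2)) (by omega) with h' | h'
        · exact Or.inl h'
        · exact Or.inr (Or.inl h')
    · -- hodd
      show Odd (((Finset.range (m-2)).filter
        (fun j => B2 k (v (2 + j % (m-2))) ≠ 0)).card)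
      have hfil : (Finset.range (m-2)).filter (fun j => B2 k (v (2 + j % (m-2))) ≠ 0)
          = Finset.range (m-2) := by
        apply Finset.filter_true_of_mem
        intro j hj
        rw [Finset.mem_range] at hj
        rw [Nat.mod_eq_of_lt hj]
        rcases eq_or_ne j 0 with h | h
        · rw [h]
          show B2 k (v (2+0)) ≠ 0
          rw [show (2:ℕ)+0 = 2 by omega, A2'']
          norm_num
        · rw [C2all (2+j) (by omega) (by omega)]
          rcases hall (2+j) (by omega) with h' | h' <;> rw [h'] <;> norm_num
      rw [hfil, Finset.card_range]
      obtain ⟨t, ht⟩ := hOdd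
      exact ⟨t-1, by omega⟩
    · -- hc3
      show 3 ≤ ((Finset.range (m-2)).filter
        (fun j => B2 k (v (2 + j % (m-2))) ≠ 0)).card
      have hfil : (Finset.range (m-2)).filter (fun j => B2 k (v (2 + j % (m-2))) ≠ 0)
          = Finset.range (m-2) := by
        apply Finset.filter_true_of_mem
        intro j hj
        rw [Finset.mem_range] at hj
        rw [Nat.mod_eq_of_lt hj]
        rcases eq_or_ne j 0 with h | h
        · rw [h]
          show B2 k (v (2+0)) ≠ 0
          rw [show (2:ℕ)+0 = 2 by omega, A2'']
          norm_num
        · rw [C2all (2+j) (by omega) (by omega)]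
          rcases hall (2+j) (by omega) with h' | h' <;> rw [h'] <;> norm_num
      rw [hfil, Finset.card_range]
      omega

end AuxWheel

section AuxMain

lemma wheel_all {n : ℕ} {B : Matrix (Fin n) (Fin n) ℤ} {k : Fin n} {m : ℕ} {v : ℕ → Fin n}
    (hB : IsSkewQ B) (hC : Conf B k m v) (hOdd : Odd m)
    (hall : ∀ i, i < m → B k (v i) = 1 ∨ B k (v i) = -1)
    (h0 : B k (v 0) = 1) (h1 : B k (v 1) = 1)
    (IH : ∀ m', m' < m → ∀ (n' : ℕ) (B' : Matrix (Fin n') (Fin n') ℤ) (k' : Fin n')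
      (v' : ℕ → Fin n'), IsSkewQ B' → Conf B' k' m' v' → Unb B') :
    Unb B := by
  have hm := hC.hm
  rcases Nat.lt_or_ge m 4 with h4 | h4
  · have hm3 : m = 3 := by omega
    subst hm3
    exact wheel3 hB hC h0 h1 (hall 2 (by omega))
  · have hm5 : 5 ≤ m := by obtain ⟨t, ht⟩ := hOdd; omega
    rcases wheel_main hB hC hm5 hOdd hall h0 h1 with hU | hConf
    · exact hU
    · have hU2 := IH (m-2) (by omega) n _ k _ ((hB.mutate_skew _).mutate_skew _) hConf
      exact unb_prepend B [v 0, v 1] hU2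

theorem conf_unb : ∀ (m n : ℕ) (B : Matrix (Fin n) (Fin n) ℤ) (k : Fin n) (v : ℕ → Fin n),
    IsSkewQ B → Conf B k m v → Unb B := by
  intro m
  induction m using Nat.strong_induction_on with
  | _ m IH =>
    intro n B k v hB hC
    by_cases hz : ∃ i, i < m ∧ B k (v i) = 0
    · -- contract an arc
      obtain ⟨i, him, hiz⟩ := hz
      have hm4 : 4 ≤ m := by
        by_contra hlt
        have hsub : (Finset.range m).filter (fun j => B k (v j) ≠ 0)
            ⊆ (Finset.range m).erase i := by
          intro x hx
          rw [Finset.mem_filter] at hx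
          rw [Finset.mem_erase]
          exact ⟨fun he => hx.2 (he ▸ hiz), hx.1⟩
        have hcle := Finset.card_le_card hsub
        rw [Finset.card_erase_of_mem (Finset.mem_range.mpr him), Finset.card_range] at hcle
        have h3 := hC.hc3
        have hm := hC.hm
        omega
      have hC1 := hC.shift (i+1)
      have hzlast : B k ((fun j => v (j + (i+1))) (m-1)) = 0 := by
        show B k (v (m-1+(i+1))) = 0
        rw [show m-1+(i+1) = i + m by omega, hC.hper i]
        exact hiz
      have hC2 := hC1.delete hB hm4 hzlast
      have hU := IH (m-1) (by omega) n _ k _ (hB.mutate_skew _) hC2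
      exact unb_prepend B [(fun j => v (j + (i+1))) (m-1)] hU
    · -- the wheel case
      push_neg at hz
      have hallm : ∀ i, i < m → B k (v i) = 1 ∨ B k (v i) = -1 := by
        intro i him
        rcases hC.hsp i with h | h | h
        · exact Or.inl h
        · exact Or.inr h
        · exact absurd h (hz i him)
      have hall : ∀ i, B k (v i) = 1 ∨ B k (v i) = -1 := by
        intro i
        rw [hC.vmod i]
        exact hallm _ (Nat.mod_lt _ hC.hm0)
      have hOdd : Odd m := by
        have hfil : (Finset.range m).filter (fun i => B k (v i) ≠ 0) = Finset.range m :=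
          Finset.filter_true_of_mem (fun x hx => by
            rcases hallm x (Finset.mem_range.mp hx) with h | h <;> rw [h] <;> norm_num)
        have := hC.hodd
        rwa [hfil, Finset.card_range] at this
      obtain ⟨c, hpair⟩ : ∃ c, B k (v c) = B k (v (c + 1)) := by
        by_contra hno
        push_neg at hno
        have hflip : ∀ c, B k (v (c+1)) = - B k (v c) := by
          intro c
          rcases hall c with ha | ha <;> rcases hall (c+1) with hb | hb
          · exact absurd (ha.trans hb.symm) (hno c)
          · rw [ha, hb]
          · rw [ha, hb]; norm_num
          · exact absurd (ha.trans hb.symm) (hno c)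
        have hkey : ∀ j, B k (v j) = (-1)^j * B k (v 0) := by
          intro j
          induction j with
          | zero => simp
          | succ j ih => rw [hflip j, ih, pow_succ]; ring
        have h1 : B k (v (0 + m)) = B k (v 0) := by rw [hC.hper 0]
        rw [Nat.zero_add] at h1
        have h2 := hkey m
        rw [hOdd.neg_one_pow] at h2
        rcases hall 0 with h | h <;> omega
      have IH' : ∀ m', m' < m → ∀ (n' : ℕ) (B' : Matrix (Fin n') (Fin n') ℤ) (k' : Fin n')
          (v' : ℕ → Fin n'), IsSkewQ B' → Conf B' k' m' v' → Unb B' :=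
        fun m' hm' n' B' k' v' hB' hC' => IH m' hm' n' B' k' v' hB' hC'
      rcases hall c with hsgn | hsgn
      · -- pair of +1's at (c, c+1); rotate
        have hC1 := hC.shift c
        have h0' : B k (v (0 + c)) = 1 := by rw [Nat.zero_add]; exact hsgn
        have h1' : B k (v (1 + c)) = 1 := by
          rw [Nat.add_comm 1 c, ← hpair]; exact hsgn
        exact wheel_all hB hC1 hOdd (fun i _ => hall (i + c)) h0' h1' IH'
      · -- pair of -1's: negate, reverse and rotate
        have hBneg : IsSkewQ (-B) := by
          intro i j
          simp [Matrix.neg_apply, hB i j]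
        have hC1 := hC.shift c
        have hC2 := hC1.neg_rev hB
        have hC3 := hC2.shift (m-2)
        have hm := hC.hm
        have h0₃ : (-B) k (v (m-1-(0+(m-2))%m + c)) = 1 := by
          rw [Nat.zero_add, Nat.mod_eq_of_lt (show m-2 < m by omega),
            show m-1-(m-2) = 1 by omega, show (1:ℕ)+c = c+1 by omega]
          simp only [Matrix.neg_apply]
          rw [← hpair, hsgn]
          norm_num
        have h1₃ : (-B) k (v (m-1-(1+(m-2))%m + c)) = 1 := by
          rw [show 1+(m-2) = m-1 by omega, Nat.mod_eq_of_lt (show m-1 < m by omega),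
            show m-1-(m-1) = 0 by omega, Nat.zero_add]
          simp only [Matrix.neg_apply]
          rw [hsgn]
          norm_num
        have hall₃ : ∀ i, i < m → (-B) k (v (m-1-(i+(m-2))%m + c)) = 1 ∨
            (-B) k (v (m-1-(i+(m-2))%m + c)) = -1 := by
          intro i _
          rcases hall (m-1-(i+(m-2))%m + c) with h | h
          · right; simp [h]
          · left; simp [h]
        exact unb_neg B hB (wheel_all hBneg hC3 hOdd hall₃ h0₃ h1₃ IH')

end AuxMain


/-- a simply-laced quiver containing an oriented cycle `C` together
with a vertex `k` outside `C` adjacent to exactly an odd number `≥ 3` of vertices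
of `C` is of infinite mutation type. -/
theorem stmt4 {n : ℕ} (B : Matrix (Fin n) (Fin n) ℤ) (hB : IsSkewQ B)
    (hsl : SimplyLaced B) {m : ℕ} (f : Fin m ↪ Fin n) (k : Fin n)
    (hk : k ∉ Set.range ⇑f)
    (hcyc : IsOrientedCycleMat (B.submatrix ⇑f ⇑f))
    (hodd : Odd (Finset.univ.filter (fun i : Fin m => B k (f i) ≠ 0)).card)
    (h3 : 3 ≤ (Finset.univ.filter (fun i : Fin m => B k (f i) ≠ 0)).card) :
    ¬ FiniteMutationType B := by
  apply unb_not_fmt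
  obtain ⟨hm3, ρ, hiff, hpos⟩ := hcyc
  haveI : NeZero m := ⟨by omega⟩
  set v : ℕ → Fin n := fun i => f (ρ ((i : ℕ) : ZMod m)) with hv
  have hcast : ∀ i : ℕ, (((i+1 : ℕ)) : ZMod m) = (i : ZMod m) + 1 := by
    intro i; push_cast; ring
  have hcard : ((Finset.range m).filter (fun i => B k (v i) ≠ 0)).card
      = (Finset.univ.filter (fun i : Fin m => B k (f i) ≠ 0)).card := by
    apply Finset.card_bij (fun a _ => ρ ((a : ℕ) : ZMod m))
    · intro a ha
      rw [Finset.mem_filter] at ha ⊢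
      exact ⟨Finset.mem_univ _, ha.2⟩
    · intro a ha b hb hfab
      rw [Finset.mem_filter, Finset.mem_range] at ha hb
      have h1 : ((a : ℕ) : ZMod m) = ((b : ℕ) : ZMod m) := ρ.injective hfab
      have h2 := (ZMod.natCast_eq_natCast_iff _ _ _).mp h1
      rwa [Nat.ModEq, Nat.mod_eq_of_lt ha.1, Nat.mod_eq_of_lt hb.1] at h2
    · intro b hb
      rw [Finset.mem_filter] at hb
      refine ⟨(ρ.symm b).val, ?_, ?_⟩
      · rw [Finset.mem_filter, Finset.mem_range]
        refine ⟨ZMod.val_lt _, ?_⟩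
        show B k (f (ρ (((ρ.symm b).val : ℕ) : ZMod m))) ≠ 0
        rw [ZMod.natCast_rightInverse (ρ.symm b), Equiv.apply_symm_apply]
        exact hb.2
      · show ρ (((ρ.symm b).val : ℕ) : ZMod m) = b
        rw [ZMod.natCast_rightInverse (ρ.symm b), Equiv.apply_symm_apply]
  have hconf : Conf B k m v := by
    refine ⟨hm3, ?_, ?_, ?_, ?_, ?_, ?_, ?_, ?_⟩
    · intro i
      show f (ρ (((i + m : ℕ)) : ZMod m)) = f (ρ ((i : ℕ) : ZMod m))
      congr 2
      push_cast
      simp [ZMod.natCast_self]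
    · intro i j h
      have h1 : ((i : ℕ) : ZMod m) = ((j : ℕ) : ZMod m) := ρ.injective (f.injective h)
      exact (ZMod.natCast_eq_natCast_iff _ _ _).mp h1
    · intro i h
      exact hk ⟨ρ ((i : ℕ) : ZMod m), h⟩
    · intro i
      show B (f (ρ ((i : ℕ) : ZMod m))) (f (ρ (((i+1 : ℕ)) : ZMod m))) = 1
      rw [hcast i]
      have hp := hpos ((i : ℕ) : ZMod m)
      have habs := hsl (f (ρ ((i : ℕ) : ZMod m))) (f (ρ (((i : ℕ) : ZMod m) + 1)))
      rw [abs_le] at habs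
      rw [Matrix.submatrix_apply] at hp
      omega
    · intro i j h1 h2 h3'
      show B (f (ρ ((i : ℕ) : ZMod m))) (f (ρ ((j : ℕ) : ZMod m))) = 0
      by_contra hne0
      have := (hiff ((i : ℕ) : ZMod m) ((j : ℕ) : ZMod m)).mp (by
        rw [Matrix.submatrix_apply]; exact hne0)
      rcases this with h | h
      · rw [← hcast i] at h
        exact h1 ((ZMod.natCast_eq_natCast_iff _ _ _).mp h)
      · rw [← hcast j] at h
        exact h2 ((ZMod.natCast_eq_natCast_iff _ _ _).mp h)
    · intro i
      have := hsl k (v i)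
      rw [abs_le] at this
      omega
    · rw [hcard]; exact hodd
    · rw [hcard]; exact h3
  exact conf_unb m n B k v hB hconf
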